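/- Let F ⊂ ℝⁿ, 0 < λ < 1, and s ≥ 0. For every i ∈ ℕ let {x_k^i}_{k∈I_i} be a maximal λ^i-separated set in F. Assume that for each i ∈ ℕ and k ∈ I_i there exists j > i such that the number N_j of indices l ∈ I_j with B(x_l^j, λ^j) ∩ B(x_k^i, λ^i) ≠ ∅ satisfies N_j < λ^{-(j-i)s}. Then the Hausdorff dimension of F is at most s. -/

import Mathlib

open MeasureTheory Metric Set Filter
open scoped ENNReal NNReal
noncomputable section

abbrev Euc (n : ℕ) := EuclideanSpace ℝ (Fin n)

namespace Stmt0Aux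

attribute [local instance] Classical.propDecidable

lemma sum_union_le' {α M : Type*} [DecidableEq α] [AddCommMonoid M] [PartialOrder M]
    [CanonicallyOrderedAdd M] [IsOrderedAddMonoid M]
    (s t : Finset α) (f : α → M) : ∑ x ∈ s ∪ t, f x ≤ ∑ x ∈ s, f x + ∑ x ∈ t, f x := by
  calc ∑ x ∈ s ∪ t, f x ≤ ∑ x ∈ s ∪ t, f x + ∑ x ∈ s ∩ t, f x := le_add_right le_rfl
    _ = ∑ x ∈ s, f x + ∑ x ∈ t, f x := Finset.sum_union_inter

lemma sum_biUnion_le' {α β M : Type*} [DecidableEq β] [AddCommMonoid M] [PartialOrder M]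
    [CanonicallyOrderedAdd M] [IsOrderedAddMonoid M]
    (s : Finset α) (t : α → Finset β) (f : β → M) :
    ∑ x ∈ s.biUnion t, f x ≤ ∑ a ∈ s, ∑ x ∈ t a, f x := by
  classical
  induction s using Finset.induction_on with
  | empty => simp
  | insert _ _ ha ih =>
    rw [Finset.biUnion_insert, Finset.sum_insert ha]
    exact (sum_union_le' _ _ _).trans (add_le_add le_rfl ih)

variable {n : ℕ}

def Good (T : ℕ → Set (Euc n)) (lam s : ℝ) (p : ℕ × Euc n) (j : ℕ) : Prop :=
  p.1 < j ∧ {y ∈ T j | (ball y (lam ^ j) ∩ ball p.2 (lam ^ p.1)).Nonempty}.Finite ∧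
    ({y ∈ T j | (ball y (lam ^ j) ∩ ball p.2 (lam ^ p.1)).Nonempty}.ncard : ℝ)
      < lam ^ (-((j : ℝ) - (p.1 : ℝ)) * s)

noncomputable def nxt (T : ℕ → Set (Euc n)) (lam s : ℝ) (p : ℕ × Euc n) : ℕ :=
  if h : ∃ j, Good T lam s p j then h.choose else p.1 + 1

lemma nxt_good {T : ℕ → Set (Euc n)} {lam s : ℝ} {p : ℕ × Euc n}
    (h : ∃ j, Good T lam s p j) : Good T lam s p (nxt T lam s p) := by
  rw [nxt, dif_pos h]; exact h.choose_spec

def chSet (T : ℕ → Set (Euc n)) (lam s : ℝ) (p : ℕ × Euc n) : Set (Euc n) :=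
  {y ∈ T (nxt T lam s p) |
    (ball y (lam ^ nxt T lam s p) ∩ ball p.2 (lam ^ p.1)).Nonempty}

open Classical in
noncomputable def chFin (T : ℕ → Set (Euc n)) (lam s : ℝ) (p : ℕ × Euc n) :
    Finset (ℕ × Euc n) :=
  if h : (chSet T lam s p).Finite then h.toFinset.image fun y => (nxt T lam s p, y) else ∅

lemma nxt_lt {T : ℕ → Set (Euc n)} {lam s : ℝ} {p : ℕ × Euc n}
    (h : ∃ j, Good T lam s p j) : p.1 < nxt T lam s p := (nxt_good h).1

lemma chSet_finite {T : ℕ → Set (Euc n)} {lam s : ℝ} {p : ℕ × Euc n}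
    (h : ∃ j, Good T lam s p j) : (chSet T lam s p).Finite := (nxt_good h).2.1

lemma chSet_ncard {T : ℕ → Set (Euc n)} {lam s : ℝ} {p : ℕ × Euc n}
    (h : ∃ j, Good T lam s p j) :
    ((chSet T lam s p).ncard : ℝ)
      < lam ^ (-((nxt T lam s p : ℝ) - (p.1 : ℝ)) * s) := (nxt_good h).2.2

lemma chFin_eq {T : ℕ → Set (Euc n)} {lam s : ℝ} {p : ℕ × Euc n}
    (h : (chSet T lam s p).Finite) :
    chFin T lam s p = h.toFinset.image fun y => (nxt T lam s p, y) := dif_pos h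

open Classical in
noncomputable def Gen (T : ℕ → Set (Euc n)) (lam s : ℝ) (x₀ : Euc n) :
    ℕ → Finset (ℕ × Euc n)
  | 0 => {(0, x₀)}
  | m + 1 => (Gen T lam s x₀ m).biUnion (chFin T lam s)

lemma Gen_zero (T : ℕ → Set (Euc n)) (lam s : ℝ) (x₀ : Euc n) :
    Gen T lam s x₀ 0 = {(0, x₀)} := rfl

lemma Gen_succ (T : ℕ → Set (Euc n)) (lam s : ℝ) (x₀ : Euc n) (m : ℕ) :
    Gen T lam s x₀ (m + 1) = (Gen T lam s x₀ m).biUnion (chFin T lam s) := rfl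

end Stmt0Aux

open Stmt0Aux

/-- If `F ⊆ ℝⁿ`, `0 < λ < 1`, `s ≥ 0`, and for every `i` the set `T i` is a maximal
`λ^i`-separated net in `F`, and for each `i` and each net point `x ∈ T i` there is
`j > i` with `N_j < λ^{-(j-i)s}`, then `dim_H F ≤ s`. -/
theorem stmt0 {n : ℕ} (F : Set (Euc n)) (lam s : ℝ) (hl0 : 0 < lam) (hl1 : lam < 1)
    (hs : 0 ≤ s) (T : ℕ → Set (Euc n))
    (hsub : ∀ i, T i ⊆ F)
    (hsep : ∀ i, ∀ x ∈ T i, ∀ y ∈ T i, x ≠ y → lam ^ i ≤ dist x y)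
    (hmax : ∀ i, ∀ z ∈ F, ∃ x ∈ T i, dist z x < lam ^ i)
    (hN : ∀ i : ℕ, ∀ x ∈ T i, ∃ j, i < j ∧
      {y ∈ T j | (ball y (lam ^ j) ∩ ball x (lam ^ i)).Nonempty}.Finite ∧
      ({y ∈ T j | (ball y (lam ^ j) ∩ ball x (lam ^ i)).Nonempty}.ncard : ℝ)
        < lam ^ (-((j : ℝ) - (i : ℝ)) * s)) :
    dimH F ≤ ENNReal.ofReal s := by
  classical
  -- `T 0` is countable since it is `1`-separated
  have hT0c : (T 0).Countable := by
    have hpd : (T 0).PairwiseDisjoint fun x => ball x (2⁻¹ : ℝ) := by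
      intro x hx y hy hxy
      have h1 : (1 : ℝ) ≤ dist x y := by simpa using hsep 0 x hx y hy hxy
      exact ball_disjoint_ball (by linarith)
    exact hpd.countable_of_isOpen (fun _ _ => isOpen_ball)
      (fun x _ => (nonempty_ball).2 (by norm_num))
  have hFsub : F ⊆ ⋃ x ∈ T 0, F ∩ ball x 1 := by
    intro z hz
    obtain ⟨x, hx, hd⟩ := hmax 0 z hz
    exact mem_biUnion hx ⟨hz, mem_ball.2 (by simpa using hd)⟩
  refine le_trans (dimH_mono hFsub) ?_
  rw [dimH_bUnion hT0c]
  refine iSup₂_le fun x₀ hx₀ => ?_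
  refine dimH_le fun d' hd' => ?_
  by_contra hcon
  push_neg at hcon
  have hsd : s < (d' : ℝ) := by
    rw [← ENNReal.ofReal_coe_nnreal] at hcon
    exact (ENNReal.ofReal_lt_ofReal_iff_of_nonneg hs).1 hcon
  set d : ℝ := (d' : ℝ) with hdset
  have hd0 : 0 < d := hs.trans_lt hsd
  -- basic facts
  have hex : ∀ p : ℕ × Euc n, p.2 ∈ T p.1 → ∃ j, Good T lam s p j := by
    intro p hp
    obtain ⟨j, hj⟩ := hN p.1 p.2 hp
    exact ⟨j, hj⟩
  -- invariant of the generations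
  have hGen : ∀ m, ∀ p ∈ Gen T lam s x₀ m, p.2 ∈ T p.1 ∧ m ≤ p.1 := by
    intro m
    induction m with
    | zero =>
      intro p hp
      rw [Gen_zero, Finset.mem_singleton] at hp
      subst hp
      exact ⟨hx₀, le_refl 0⟩
    | succ m ih =>
      intro p hp
      rw [Gen_succ, Finset.mem_biUnion] at hp
      obtain ⟨q, hq, hpq⟩ := hp
      obtain ⟨hqT, hqm⟩ := ih q hq
      have hg := nxt_good (hex q hqT)
      rw [chFin_eq (chSet_finite (hex q hqT))] at hpq
      simp only [Finset.mem_image, Set.Finite.mem_toFinset] at hpq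
      obtain ⟨y, hy, rfl⟩ := hpq
      exact ⟨hy.1, Nat.succ_le_of_lt (lt_of_le_of_lt hqm hg.1)⟩
  -- covering property
  have hcov : ∀ m, F ∩ ball x₀ 1 ⊆ ⋃ p ∈ Gen T lam s x₀ m, ball p.2 (lam ^ p.1) := by
    intro m
    induction m with
    | zero =>
      intro z hz
      refine Set.mem_biUnion (by rw [Gen_zero]; exact Finset.mem_singleton_self _) ?_
      simpa using hz.2
    | succ m ih =>
      intro z hz
      have hz' := ih hz
      simp only [Set.mem_iUnion, exists_prop] at hz'
      obtain ⟨p, hp, hzp⟩ := hz'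
      have hpT := (hGen m p hp).1
      have hg := nxt_good (hex p hpT)
      obtain ⟨y, hyT, hyd⟩ := hmax (nxt T lam s p) z hz.1
      have hzy : z ∈ ball y (lam ^ nxt T lam s p) := mem_ball.2 hyd
      have hych : y ∈ chSet T lam s p := ⟨hyT, ⟨z, hzy, hzp⟩⟩
      have hmem : (nxt T lam s p, y) ∈ Gen T lam s x₀ (m + 1) := by
        rw [Gen_succ, Finset.mem_biUnion]
        refine ⟨p, hp, ?_⟩
        rw [chFin_eq (chSet_finite (hex p hpT))]
        exact Finset.mem_image.2 ⟨y, (Set.Finite.mem_toFinset _).2 hych, rfl⟩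
      exact Set.mem_biUnion hmem hzy
  -- weights
  set L : ℝ≥0∞ := ENNReal.ofReal lam with hL
  have hL0 : L ≠ 0 := by simp [hL, ENNReal.ofReal_eq_zero, not_le, hl0]
  have hLtop : L ≠ ⊤ := ENNReal.ofReal_ne_top
  have hL1 : L < 1 := by simpa [hL] using ENNReal.ofReal_lt_one.2 hl1
  have key : ∀ p : ℕ × Euc n, p.2 ∈ T p.1 →
      ∑ q ∈ chFin T lam s p, L ^ ((q.1 : ℝ) * d)
        ≤ L ^ (d - s) * L ^ ((p.1 : ℝ) * d) := by
    intro p hp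
    have hg := nxt_good (hex p hp)
    set jj := nxt T lam s p with hjj
    have hfin : (chSet T lam s p).Finite := chSet_finite (hex p hp)
    have hcard : (chFin T lam s p).card ≤ (chSet T lam s p).ncard := by
      rw [chFin_eq hfin]
      refine (Finset.card_image_le).trans ?_
      rw [Set.ncard_eq_toFinset_card _ hfin]
    have hsum1 : ∑ q ∈ chFin T lam s p, L ^ ((q.1 : ℝ) * d)
        ≤ ((chFin T lam s p).card : ℝ≥0∞) * L ^ ((jj : ℝ) * d) := by
      rw [← nsmul_eq_mul]
      refine Finset.sum_le_card_nsmul _ _ _ ?_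
      intro q hq
      rw [chFin_eq hfin] at hq
      simp only [Finset.mem_image, Set.Finite.mem_toFinset] at hq
      obtain ⟨y, _, rfl⟩ := hq
      exact le_rfl
    have hcard2 : ((chFin T lam s p).card : ℝ≥0∞) ≤ L ^ (-((jj : ℝ) - (p.1 : ℝ)) * s) := by
      calc ((chFin T lam s p).card : ℝ≥0∞) ≤ ((chSet T lam s p).ncard : ℝ≥0∞) := by
            exact_mod_cast hcard
        _ = ENNReal.ofReal ((chSet T lam s p).ncard : ℝ) := by
            rw [ENNReal.ofReal_natCast]
        _ ≤ ENNReal.ofReal (lam ^ (-((jj : ℝ) - (p.1 : ℝ)) * s)) :=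
            ENNReal.ofReal_le_ofReal (chSet_ncard (hex p hp)).le
        _ = L ^ (-((jj : ℝ) - (p.1 : ℝ)) * s) := (ENNReal.ofReal_rpow_of_pos hl0).symm
    have hmain : L ^ (-((jj : ℝ) - (p.1 : ℝ)) * s) * L ^ ((jj : ℝ) * d)
        ≤ L ^ (d - s) * L ^ ((p.1 : ℝ) * d) := by
      rw [← ENNReal.rpow_add _ _ hL0 hLtop, ← ENNReal.rpow_add _ _ hL0 hLtop]
      apply ENNReal.rpow_le_rpow_of_exponent_ge hL1.le
      have hj1 : (1 : ℝ) ≤ (jj : ℝ) - (p.1 : ℝ) := by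
        have := hg.1
        have : (p.1 : ℝ) + 1 ≤ (jj : ℝ) := by exact_mod_cast this
        linarith
      have hds : 0 ≤ d - s := by linarith
      nlinarith [mul_le_mul_of_nonneg_right hj1 hds]
    calc ∑ q ∈ chFin T lam s p, L ^ ((q.1 : ℝ) * d)
        ≤ ((chFin T lam s p).card : ℝ≥0∞) * L ^ ((jj : ℝ) * d) := hsum1
      _ ≤ L ^ (-((jj : ℝ) - (p.1 : ℝ)) * s) * L ^ ((jj : ℝ) * d) :=
          mul_le_mul' hcard2 le_rfl
      _ ≤ L ^ (d - s) * L ^ ((p.1 : ℝ) * d) := hmain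
  have hW : ∀ m, ∑ p ∈ Gen T lam s x₀ m, L ^ ((p.1 : ℝ) * d) ≤ (L ^ (d - s)) ^ m := by
    intro m
    induction m with
    | zero => simp [Gen_zero]
    | succ m ih =>
      calc ∑ p ∈ Gen T lam s x₀ (m + 1), L ^ ((p.1 : ℝ) * d)
          ≤ ∑ q ∈ Gen T lam s x₀ m, ∑ p ∈ chFin T lam s q, L ^ ((p.1 : ℝ) * d) := by
            rw [Gen_succ]; exact sum_biUnion_le' _ _ _
        _ ≤ ∑ q ∈ Gen T lam s x₀ m, L ^ (d - s) * L ^ ((q.1 : ℝ) * d) :=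
            Finset.sum_le_sum fun q hq => key q (hGen m q hq).1
        _ = L ^ (d - s) * ∑ q ∈ Gen T lam s x₀ m, L ^ ((q.1 : ℝ) * d) := by
            rw [Finset.mul_sum]
        _ ≤ L ^ (d - s) * (L ^ (d - s)) ^ m := mul_le_mul' le_rfl ih
        _ = (L ^ (d - s)) ^ (m + 1) := by rw [pow_succ, mul_comm]
  -- Hausdorff measure bound
  have hμ : μH[d] (F ∩ ball x₀ 1) = 0 := by
    have hle : μH[d] (F ∩ ball x₀ 1) ≤
        liminf (fun m => ∑ i : (Gen T lam s x₀ m : Finset (ℕ × Euc n)),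
          EMetric.diam (ball (i : ℕ × Euc n).2 (lam ^ (i : ℕ × Euc n).1)) ^ d) atTop := by
      apply MeasureTheory.Measure.hausdorffMeasure_le_liminf_sum d (F ∩ ball x₀ 1)
        (fun m => 2 * ENNReal.ofReal (lam ^ m))
      · have h0 : Tendsto (fun m : ℕ => lam ^ m) atTop (nhds 0) :=
          tendsto_pow_atTop_nhds_zero_of_lt_one hl0.le hl1
        have := ENNReal.Tendsto.const_mul (a := (2 : ℝ≥0∞))
          (m := fun m : ℕ => ENNReal.ofReal (lam ^ m))
          (by simpa using ENNReal.tendsto_ofReal (a := 0) h0) (Or.inr ENNReal.ofNat_ne_top)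
        simpa using this
      · refine Eventually.of_forall fun m => ?_
        intro i
        have hm := (hGen m i i.2).2
        calc EMetric.diam (ball (i : ℕ × Euc n).2 (lam ^ (i : ℕ × Euc n).1))
            ≤ 2 * ENNReal.ofReal (lam ^ (i : ℕ × Euc n).1) := by
              rw [← Metric.emetric_ball]
              exact EMetric.diam_ball
          _ ≤ 2 * ENNReal.ofReal (lam ^ m) := by
              exact mul_le_mul' le_rfl (ENNReal.ofReal_le_ofReal
                (pow_le_pow_of_le_one hl0.le hl1.le hm))
      · refine Eventually.of_forall fun m => ?_
        intro z hz
        have := hcov m hz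
        simp only [Set.mem_iUnion, exists_prop] at this
        obtain ⟨p, hp, hzp⟩ := this
        exact Set.mem_iUnion.2 ⟨⟨p, hp⟩, hzp⟩
    have hbound : ∀ m : ℕ,
        (∑ i : (Gen T lam s x₀ m : Finset (ℕ × Euc n)),
          EMetric.diam (ball (i : ℕ × Euc n).2 (lam ^ (i : ℕ × Euc n).1)) ^ d)
        ≤ (2 : ℝ≥0∞) ^ d * (L ^ (d - s)) ^ m := by
      intro m
      have hterm : ∀ p : ℕ × Euc n,
          EMetric.diam (ball p.2 (lam ^ p.1)) ^ d ≤ (2 : ℝ≥0∞) ^ d * L ^ ((p.1 : ℝ) * d) := by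
        intro p
        have h1 : EMetric.diam (ball p.2 (lam ^ p.1)) ≤ 2 * ENNReal.ofReal (lam ^ p.1) := by
          rw [← Metric.emetric_ball]; exact EMetric.diam_ball
        calc EMetric.diam (ball p.2 (lam ^ p.1)) ^ d
            ≤ (2 * ENNReal.ofReal (lam ^ p.1)) ^ d :=
              ENNReal.rpow_le_rpow h1 hd0.le
          _ = (2 : ℝ≥0∞) ^ d * (ENNReal.ofReal (lam ^ p.1)) ^ d :=
              ENNReal.mul_rpow_of_nonneg _ _ hd0.le
          _ = (2 : ℝ≥0∞) ^ d * L ^ ((p.1 : ℝ) * d) := by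
              congr 1
              rw [ENNReal.ofReal_pow hl0.le, ← ENNReal.rpow_natCast L p.1,
                ← ENNReal.rpow_mul]
      calc (∑ i : (Gen T lam s x₀ m : Finset (ℕ × Euc n)),
            EMetric.diam (ball (i : ℕ × Euc n).2 (lam ^ (i : ℕ × Euc n).1)) ^ d)
          = ∑ p ∈ Gen T lam s x₀ m, EMetric.diam (ball p.2 (lam ^ p.1)) ^ d :=
            Finset.sum_coe_sort (Gen T lam s x₀ m)
              (fun p => EMetric.diam (ball p.2 (lam ^ p.1)) ^ d)
        _ ≤ ∑ p ∈ Gen T lam s x₀ m, (2 : ℝ≥0∞) ^ d * L ^ ((p.1 : ℝ) * d) :=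
            Finset.sum_le_sum fun p _ => hterm p
        _ = (2 : ℝ≥0∞) ^ d * ∑ p ∈ Gen T lam s x₀ m, L ^ ((p.1 : ℝ) * d) := by
            rw [Finset.mul_sum]
        _ ≤ (2 : ℝ≥0∞) ^ d * (L ^ (d - s)) ^ m := mul_le_mul' le_rfl (hW m)
    have htend : Tendsto (fun m : ℕ => (2 : ℝ≥0∞) ^ d * (L ^ (d - s)) ^ m) atTop (nhds 0) := by
      have hq1 : L ^ (d - s) < 1 := ENNReal.rpow_lt_one hL1 (by linarith)
      have h2d : (2 : ℝ≥0∞) ^ d ≠ ⊤ :=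
        ENNReal.rpow_ne_top_of_nonneg hd0.le ENNReal.ofNat_ne_top
      have := ENNReal.Tendsto.const_mul (a := (2 : ℝ≥0∞) ^ d)
        (ENNReal.tendsto_pow_atTop_nhds_zero_of_lt_one hq1) (Or.inr h2d)
      simpa using this
    have hlim : liminf (fun m => ∑ i : (Gen T lam s x₀ m : Finset (ℕ × Euc n)),
        EMetric.diam (ball (i : ℕ × Euc n).2 (lam ^ (i : ℕ × Euc n).1)) ^ d) atTop ≤ 0 := by
      calc liminf (fun m => ∑ i : (Gen T lam s x₀ m : Finset (ℕ × Euc n)),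
            EMetric.diam (ball (i : ℕ × Euc n).2 (lam ^ (i : ℕ × Euc n).1)) ^ d) atTop
          ≤ liminf (fun m : ℕ => (2 : ℝ≥0∞) ^ d * (L ^ (d - s)) ^ m) atTop :=
            liminf_le_liminf (Eventually.of_forall hbound)
        _ = 0 := htend.liminf_eq
    exact le_antisymm (hle.trans hlim) (zero_le)
  rw [hμ] at hd'
  simp at hd'
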